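/- If (σ_N, P) is a counter-example to Ω ⊨ Obs, and Ω' is any distribution of Σ such that no discrepancy δ for (σ_N, P) is contained in any alphabet of Ω', then (σ_N, P) extends to a counter-example to Ω' ⊨ Obs: for every Σ_j ∈ Ω' there exists σ in the positive image of P with proj(σ_N, Σ_j) = proj(σ, Σ_j). -/

import Mathlib

open Classical in
/-- Projection of a trace onto a sub-alphabet. -/
noncomputable def proj {A : Type*} (s : Set A) : List A → List A
  | [] => []
  | a :: σ => if a ∈ s then a :: proj s σ else proj s σ

/-- A distribution of the alphabet `A`: a family of sub-alphabets covering `A`. -/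
def AlphDistribution {A : Type*} (Ω : Set (Set A)) : Prop := ⋃₀ Ω = Set.univ

/-- A language agrees with an observation function (`L ⊨ Obs`). -/
def Agrees {A : Type*} (L : Set (List A)) (Obs : List A → Option Bool) : Prop :=
  ∀ σ b, Obs σ = some b → (σ ∈ L ↔ b = true)

/-- `L` is a product language over the distribution `Ω`: it is the parallel
composition of a family of languages over the component alphabets. -/
def ProductLang {A : Type*} (Ω : Set (Set A)) (L : Set (List A)) : Prop :=
  ∃ Ls : Set A → Set (List A),
    (∀ s ∈ Ω, ∀ σ ∈ Ls s, ∀ a ∈ σ, a ∈ s) ∧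
    L = {σ | ∀ s ∈ Ω, proj s σ ∈ Ls s}

/-- `Ω ⊨ Obs`: some product language over `Ω` agrees with `Obs`. -/
def Models {A : Type*} (Ω : Set (Set A)) (Obs : List A → Option Bool) : Prop :=
  ∃ L, ProductLang Ω L ∧ Agrees L Obs

/-- A counter-example to `Ω ⊨ Obs`: a negative observation `σN` together with,
for each component alphabet, a positive observation with matching projection. -/
def IsCED {A : Type*} (Ω : Set (Set A)) (Obs : List A → Option Bool)
    (σN : List A) (P : Set A → List A) : Prop :=
  Obs σN = some false ∧
  ∀ s ∈ Ω, Obs (P s) = some true ∧ proj s σN = proj s (P s)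

/-- The connectivity preorder: `Ω` is less connecting than `Ω'`. -/
def lessConn {A : Type*} (Ω Ω' : Set (Set A)) : Prop :=
  ∀ s ∈ Ω, ∃ t ∈ Ω', s ⊆ t

/-- Multiplicity discrepancies: symbols occurring a different number of times. -/
def MultDisc {A : Type*} [DecidableEq A] (x y : List A) : Set A :=
  {a | x.count a ≠ y.count a}

/-- Order discrepancy: a pair of distinct symbols, each with equal multiplicity in
both traces, whose relative order differs between the two traces. -/
def OrdDisc {A : Type*} [DecidableEq A] (x y : List A) (a b : A) : Prop :=
  a ≠ b ∧ x.count a = y.count a ∧ x.count b = y.count b ∧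
    proj {a, b} x ≠ proj {a, b} y

/-- `δ` is a discrepancy for the counter-example `(σN, P)`: for every component
alphabet it contains a multiplicity discrepancy or an order-discrepancy pair. -/
def IsDisc {A : Type*} [DecidableEq A] (Ω : Set (Set A)) (σN : List A)
    (P : Set A → List A) (δ : Set A) : Prop :=
  ∀ s ∈ Ω, (∃ a ∈ δ, a ∈ MultDisc σN (P s)) ∨
    (∃ a b, a ∈ δ ∧ b ∈ δ ∧ OrdDisc σN (P s) a b)

open Classical in
theorem proj_cons' {A : Type*} (s : Set A) (a : A) (l : List A) :
    proj s (a :: l) = if a ∈ s then a :: proj s l else proj s l := rfl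

theorem mem_of_mem_proj {A : Type*} {s : Set A} {b : A} :
    ∀ {l : List A}, b ∈ proj s l → b ∈ s := by
  intro l
  induction l with
  | nil => intro h; simp [proj] at h
  | cons a l ih =>
    rw [proj_cons']
    split
    · intro h
      rcases List.mem_cons.1 h with h | h
      · subst h; assumption
      · exact ih h
    · exact ih

theorem count_proj {A : Type*} [DecidableEq A] {s : Set A} {a : A} (ha : a ∈ s) :
    ∀ l : List A, (proj s l).count a = l.count a := by
  intro l
  induction l with
  | nil => rfl
  | cons c l ih =>
    rw [proj_cons']
    by_cases hc : c ∈ s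
    · simp [hc, List.count_cons, ih]
    · have : c ≠ a := fun h => hc (h ▸ ha)
      simp [hc, List.count_cons, ih, this]

theorem count_proj_not_mem {A : Type*} [DecidableEq A] {s : Set A} {a : A} (ha : a ∉ s) :
    ∀ l : List A, (proj s l).count a = 0 := by
  intro l
  induction l with
  | nil => rfl
  | cons c l ih =>
    rw [proj_cons']
    by_cases hc : c ∈ s
    · have : c ≠ a := fun h => ha (h ▸ hc)
      simp [hc, List.count_cons, ih, this]
    · simp [hc, ih]

theorem proj_proj {A : Type*} (s t : Set A) (l : List A) :
    proj t (proj s l) = proj (s ∩ t) l := by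
  induction l with
  | nil => rfl
  | cons a l ih =>
    rw [proj_cons', proj_cons']
    by_cases hs : a ∈ s
    · by_cases ht : a ∈ t
      · simp [hs, proj_cons', ht, ih, Set.mem_inter_iff]
      · simp [hs, proj_cons', ht, ih, Set.mem_inter_iff]
    · simp [hs, ih, Set.mem_inter_iff]

theorem key_lemma {A : Type*} [DecidableEq A] :
    ∀ (u v : List A), (∀ a, u.count a = v.count a) → u ≠ v →
      ∃ a b, a ≠ b ∧ a ∈ u ∧ b ∈ v ∧ proj {a, b} u ≠ proj {a, b} v := by
  intro u
  induction u with
  | nil =>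
    intro v hc hne
    exfalso
    cases v with
    | nil => exact hne rfl
    | cons b v => have := hc b; simp [List.count_cons] at this
  | cons a u ih =>
    intro v hc hne
    cases v with
    | nil => exfalso; have := hc a; simp [List.count_cons] at this
    | cons b v =>
      by_cases hab : a = b
      · subst hab
        have hc' : ∀ c, u.count c = v.count c := by
          intro c; have := hc c; simpa [List.count_cons] using this
        have hne' : u ≠ v := fun h => hne (h ▸ rfl)
        obtain ⟨c, d, hcd, hcu, hdv, hp⟩ := ih v hc' hne'
        refine ⟨c, d, hcd, List.mem_cons_of_mem _ hcu, List.mem_cons_of_mem _ hdv, ?_⟩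
        intro h
        rw [proj_cons', proj_cons'] at h
        split at h
        · exact hp (by injection h)
        · exact hp h
      · refine ⟨a, b, hab, List.mem_cons_self, List.mem_cons_self, ?_⟩
        rw [proj_cons', proj_cons']
        have ha : a ∈ ({a, b} : Set A) := by simp
        have hb : b ∈ ({a, b} : Set A) := by simp
        simp only [ha, hb, if_true]
        intro h
        have := List.head?_eq_head (l := a :: proj {a,b} u)
        have h' : (a :: proj ({a,b} : Set A) u).head? = (b :: proj ({a,b} : Set A) v).head? := by rw [h]
        simp at h'
        exact hab h'

/-- Conversely, if no discrepancy for `(σN, P)` is contained in any alphabet of a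
distribution `Ω'`, then `(σN, P)` extends to a counter-example to `Ω' ⊨ Obs`:
every alphabet of `Ω'` admits a matching trace from the positive image of `P`. -/
theorem no_discrepancy_keeps_ced {A : Type*} [DecidableEq A]
    (Ω Ω' : Set (Set A)) (hΩ' : AlphDistribution Ω')
    (Obs : List A → Option Bool) (σN : List A) (P : Set A → List A)
    (hce : IsCED Ω Obs σN P)
    (hnd : ∀ δ : Set A, IsDisc Ω σN P δ → ∀ s' ∈ Ω', ¬ δ ⊆ s') :
    ∀ s' ∈ Ω', ∃ s ∈ Ω, proj s' σN = proj s' (P s) := by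
  intro s' hs'
  by_contra hno
  push_neg at hno
  apply hnd s' _ s' hs' (subset_refl s')
  intro s hs
  by_cases hm : ∃ a ∈ s', σN.count a ≠ (P s).count a
  · left
    obtain ⟨a, ha, hne⟩ := hm
    exact ⟨a, ha, hne⟩
  · right
    push_neg at hm
    have hcounts : ∀ a, (proj s' σN).count a = (proj s' (P s)).count a := by
      intro a
      by_cases ha : a ∈ s'
      · rw [count_proj ha, count_proj ha, hm a ha]
      · rw [count_proj_not_mem ha, count_proj_not_mem ha]
    obtain ⟨a, b, hab, hau, hbv, hp⟩ :=
      key_lemma (proj s' σN) (proj s' (P s)) hcounts (hno s hs)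
    have has' : a ∈ s' := mem_of_mem_proj hau
    have hbs' : b ∈ s' := mem_of_mem_proj hbv
    refine ⟨a, b, has', hbs', hab, hm a has', hm b hbs', ?_⟩
    intro h
    apply hp
    have hsub : s' ∩ ({a, b} : Set A) = {a, b} := by
      apply Set.inter_eq_right.2
      intro x hx
      rcases hx with hx | hx
      · exact hx ▸ has'
      · exact hx ▸ hbs'
    rw [proj_proj, proj_proj, hsub, h]
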